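/- Let σ be an interval model of an interval graph G and let Ω ⊆ V(G) be a maximal clique of G. Then there exists a position p with Ω = Ω_σ(p) such that the event at position p is a starting event and the event at position p+1 is an ending event. -/

import Mathlib

/-- A combinatorial interval model of a graph `G`: an injection from the `2n` events
`beg v` (encoded `Sum.inl v`) and `end v` (encoded `Sum.inr v`) onto the positions
`{1, …, 2n}` such that each interval starts before it ends, and two distinct
vertices are non-adjacent iff their intervals are disjoint. -/
structure IntervalModel {V : Type*} [Fintype V] (G : SimpleGraph V) where
  σ : V ⊕ V → ℕ
  inj : Function.Injective σ
  lb : ∀ e, 1 ≤ σ e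
  ub : ∀ e, σ e ≤ 2 * Fintype.card V
  surj : ∀ i : ℕ, 1 ≤ i → i ≤ 2 * Fintype.card V → ∃ e, σ e = i
  begEnd : ∀ v, σ (Sum.inl v) < σ (Sum.inr v)
  adjIff : ∀ u v, u ≠ v →
    (¬ G.Adj u v ↔ σ (Sum.inr v) < σ (Sum.inl u) ∨ σ (Sum.inr u) < σ (Sum.inl v))

/-- The section of an interval model at position `p`:
vertices whose interval is "pinned" just after position `p`. -/
def intervalSection {V : Type*} [Fintype V] {G : SimpleGraph V}
    (M : IntervalModel G) (p : ℕ) : Set V :=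
  {v | M.σ (Sum.inl v) ≤ p ∧ p < M.σ (Sum.inr v)}

/-- The events of a set of vertices. -/
def eventsOf {V : Type*} (X : Set V) : Set (V ⊕ V) :=
  (Sum.inl : V → V ⊕ V) '' X ∪ (Sum.inr : V → V ⊕ V) '' X

/-- The vertex set (in the ambient graph) of a connected component of an induced subgraph. -/
def compSupp {V : Type*} {s : Set V} {H : SimpleGraph s}
    (c : H.ConnectedComponent) : Set V :=
  Subtype.val '' c.supp

/-- Every maximal clique `Ω` of an interval graph `G` with model `σ` is a section
`Ω_σ(p)` drawn between a starting and an ending event: the event at position `p` is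
a starting event and the event at position `p + 1` is an ending event. -/
theorem statement_19 {V : Type*} [Fintype V] [Nonempty V] (G : SimpleGraph V)
    (M : IntervalModel G) (Ω : Set V)
    (hclique : G.IsClique Ω)
    (hmax : ∀ Ω' : Set V, G.IsClique Ω' → Ω ⊆ Ω' → Ω' = Ω) :
    ∃ p : ℕ, Ω = intervalSection M p ∧
      (∃ v₂, M.σ (Sum.inl v₂) = p) ∧ (∃ v₁, M.σ (Sum.inr v₁) = p + 1) := by
  classical
  -- every section is a clique
  have cliqueSec : ∀ q : ℕ, G.IsClique (intervalSection M q) := by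
    intro q u hu v hv huv
    by_contra hna
    rcases (M.adjIff u v huv).1 hna with h | h
    · exact absurd (lt_of_le_of_lt hu.1 hv.2) (by omega)
    · exact absurd (lt_of_le_of_lt hv.1 hu.2) (by omega)
  -- Ω is nonempty
  have hne : Ω.Nonempty := by
    by_contra h
    rw [Set.not_nonempty_iff_eq_empty] at h
    obtain ⟨v⟩ := ‹Nonempty V›
    have := hmax {v} (G.isClique_singleton v) (by simp [h])
    rw [h] at this; simp at this
  -- pick v₁ ∈ Ω minimizing the position of its end event
  obtain ⟨v₁, hv₁Ω, hv₁min⟩ :=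
    Ω.toFinset.exists_min_image (fun v => M.σ (Sum.inr v))
      (by rwa [Set.toFinset_nonempty])
  rw [Set.mem_toFinset] at hv₁Ω
  have hv₁min' : ∀ v ∈ Ω, M.σ (Sum.inr v₁) ≤ M.σ (Sum.inr v) := by
    intro v hv; exact hv₁min v (Set.mem_toFinset.2 hv)
  set p : ℕ := M.σ (Sum.inr v₁) - 1 with hp
  have h2 : 2 ≤ M.σ (Sum.inr v₁) :=
    lt_of_le_of_lt (M.lb (Sum.inl v₁)) (M.begEnd v₁)
  have hp1 : p + 1 = M.σ (Sum.inr v₁) := by omega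
  -- every vertex of Ω begins strictly before p+1 and ends after p
  have hbeg : ∀ v ∈ Ω, M.σ (Sum.inl v) ≤ p := by
    intro v hv
    have hlt : M.σ (Sum.inl v) < M.σ (Sum.inr v₁) := by
      by_cases hvv : v = v₁
      · subst hvv; exact M.begEnd v
      · have hadj : G.Adj v v₁ := hclique hv hv₁Ω hvv
        have h1 : ¬ (M.σ (Sum.inr v₁) < M.σ (Sum.inl v) ∨
            M.σ (Sum.inr v) < M.σ (Sum.inl v₁)) := by
          rw [← M.adjIff v v₁ hvv]; exact not_not_intro hadj
        push_neg at h1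
        have hneq : M.σ (Sum.inl v) ≠ M.σ (Sum.inr v₁) := fun h =>
          Sum.inl_ne_inr (M.inj h)
        omega
    omega
  have hend : ∀ v ∈ Ω, p < M.σ (Sum.inr v) := fun v hv => by
    have := hv₁min' v hv; omega
  have hsub : Ω ⊆ intervalSection M p := fun v hv => ⟨hbeg v hv, hend v hv⟩
  have hΩ : Ω = intervalSection M p := (hmax _ (cliqueSec p) hsub).symm
  refine ⟨p, hΩ, ?_, ⟨v₁, hp1.symm⟩⟩
  -- the event at position p is a starting event
  have hple : p ≤ 2 * Fintype.card V := le_trans (by omega) (M.ub (Sum.inr v₁))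
  obtain ⟨e, he⟩ := M.surj p (by omega) hple
  cases e with
  | inl v₂ => exact ⟨v₂, he⟩
  | inr u =>
    exfalso
    -- then Ω ⊆ section (p-1), which is a clique, so section (p-1) = Ω,
    -- but u ∈ section (p-1) with end u = p < p+1 ≤ min end over Ω.
    have hsub' : Ω ⊆ intervalSection M (p - 1) := by
      intro v hv
      have h1 : M.σ (Sum.inl v) ≤ p := hbeg v hv
      have h2 : M.σ (Sum.inl v) ≠ p := fun h =>
        Sum.inl_ne_inr (M.inj (h.trans he.symm))
      have h3 := hend v hv
      exact ⟨by omega, by omega⟩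
    have hΩ' : Ω = intervalSection M (p - 1) :=
      (hmax _ (cliqueSec (p - 1)) hsub').symm
    have hbu : M.σ (Sum.inl u) < p := he ▸ M.begEnd u
    have huΩ : u ∈ Ω := hΩ' ▸ (⟨by omega, by omega⟩ :
      u ∈ intervalSection M (p - 1))
    have := hv₁min' u huΩ
    omega
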